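/- Let A and B be finite nonempty sets and S ⊆ A × B. Choose a₁,…,a_k uniformly and independently from A and b₁,…,b_k uniformly and independently from B. Then with probability at least 1 − 4·e^{−δ²k/2}, the empirical frequency Prob_{i,j}[(a_i,b_j) ∈ S] (over uniform i,j ∈ {1,…,k}) differs from |S|/(|A|·|B|) by less than δ. -/

import Mathlib

open Real

/-- Hoeffding's lemma in Bernoulli form. -/
lemma hoeffding_mgf {p : ℝ} (hp : 0 ≤ p) (hp1 : p ≤ 1) (l : ℝ) :
    (1 - p + p * exp l) * exp (-(l * p)) ≤ exp (l ^ 2 / 8) := by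
  have hD : ∀ x : ℝ, 0 < 1 - p + p * exp x := by
    intro x
    rcases lt_or_eq_of_le hp1 with h | h
    · have := exp_pos x
      nlinarith [mul_nonneg hp (exp_pos x).le]
    · rw [h]; simpa using exp_pos x
  -- g x = x^2/8 + x*p - log (1 - p + p*exp x), g ≥ 0
  set g : ℝ → ℝ := fun x => x ^ 2 / 8 + x * p - Real.log (1 - p + p * exp x) with hg
  set g' : ℝ → ℝ := fun x => x / 4 + p - p * exp x / (1 - p + p * exp x) with hg'
  have hder : ∀ x : ℝ, HasDerivAt g (g' x) x := by
    intro x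
    have hD' : HasDerivAt (fun x : ℝ => 1 - p + p * exp x) (p * exp x) x := by
      simpa using ((Real.hasDerivAt_exp x).const_mul p).const_add (1 - p)
    have hlog : HasDerivAt (fun x : ℝ => Real.log (1 - p + p * exp x))
        (p * exp x / (1 - p + p * exp x)) x := hD'.log (hD x).ne'
    have h1 : HasDerivAt (fun x : ℝ => x ^ 2 / 8 + x * p)
        (x / 4 + p) x := by
      have := ((hasDerivAt_pow 2 x).div_const 8).add ((hasDerivAt_id x).mul_const p)
      exact this.congr_deriv (by push_cast; ring)
    exact h1.sub hlog
  have hder' : ∀ x : ℝ, HasDerivAt g'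
      (1 / 4 - (p * exp x * (1 - p + p * exp x) - p * exp x * (p * exp x)) /
        (1 - p + p * exp x) ^ 2) x := by
    intro x
    have hD' : HasDerivAt (fun x : ℝ => 1 - p + p * exp x) (p * exp x) x := by
      simpa using ((Real.hasDerivAt_exp x).const_mul p).const_add (1 - p)
    have hN : HasDerivAt (fun x : ℝ => p * exp x) (p * exp x) x :=
      (Real.hasDerivAt_exp x).const_mul p
    have hq : HasDerivAt (fun x : ℝ => p * exp x / (1 - p + p * exp x))
        ((p * exp x * (1 - p + p * exp x) - p * exp x * (p * exp x)) /
          (1 - p + p * exp x) ^ 2) x := hN.div hD' (hD x).ne'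
    have h1 : HasDerivAt (fun x : ℝ => x / 4 + p) (1 / 4) x := by
      simpa using ((hasDerivAt_id x).div_const 4).add_const p
    exact h1.sub hq
  have hg''nonneg : ∀ x : ℝ, 0 ≤ deriv g' x := by
    intro x
    rw [(hder' x).deriv]
    have hx := hD x
    set a := p * exp x with ha
    have ha0 : 0 ≤ a := mul_nonneg hp (exp_pos x).le
    have hb0 : 0 ≤ 1 - p := by linarith
    have key : a * (1 - p + a) - a * a ≤ (1 - p + a) ^ 2 / 4 := by nlinarith [sq_nonneg (1 - p - a)]
    have h2 : (a * (1 - p + a) - a * a) / (1 - p + a) ^ 2 ≤ 1 / 4 := by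
      rw [div_le_iff₀ (by positivity)]
      nlinarith
    linarith
  have hg'mono : Monotone g' := by
    apply monotone_of_deriv_nonneg
    · exact fun x => (hder' x).differentiableAt
    · exact hg''nonneg
  have hg'0 : g' 0 = 0 := by
    have : (1:ℝ) - p + p * exp 0 = 1 := by simp
    simp [hg', this]
  have hg0 : g 0 = 0 := by simp [hg]
  have hgnonneg : ∀ x : ℝ, 0 ≤ g x := by
    intro x
    rcases le_total 0 x with hx | hx
    · have hmono : MonotoneOn g (Set.Ici (0:ℝ)) := by
        apply monotoneOn_of_deriv_nonneg (convex_Ici 0)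
        · exact fun y _ => (hder y).differentiableAt.continuousAt.continuousWithinAt
        · exact fun y _ => (hder y).differentiableAt.differentiableWithinAt
        · intro y hy
          rw [(hder y).deriv]
          rw [interior_Ici] at hy
          have := hg'mono (le_of_lt hy)
          rw [hg'0] at this; exact this
      have := hmono (Set.self_mem_Ici) (Set.mem_Ici.2 hx) hx
      rwa [hg0] at this
    · have hmono : AntitoneOn g (Set.Iic (0:ℝ)) := by
        apply antitoneOn_of_deriv_nonpos (convex_Iic 0)
        · exact fun y _ => (hder y).differentiableAt.continuousAt.continuousWithinAt
        · exact fun y _ => (hder y).differentiableAt.differentiableWithinAt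
        · intro y hy
          rw [(hder y).deriv]
          rw [interior_Iic] at hy
          have := hg'mono (le_of_lt hy)
          rw [hg'0] at this; exact this
      have := hmono (Set.mem_Iic.2 hx) (Set.self_mem_Iic) hx
      rwa [hg0] at this
  have hgl := hgnonneg l
  have hlog_le : Real.log (1 - p + p * exp l) ≤ l ^ 2 / 8 + l * p := by
    simp only [hg] at hgl; linarith
  have := Real.exp_le_exp.2 hlog_le
  rw [Real.exp_log (hD l)] at this
  calc (1 - p + p * exp l) * exp (-(l * p)) ≤ exp (l ^ 2 / 8 + l * p) * exp (-(l * p)) := by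
        apply mul_le_mul_of_nonneg_right this (exp_pos _).le
    _ = exp (l ^ 2 / 8) := by rw [← Real.exp_add]; ring_nf

open Real Finset

lemma exp_mul_le_affine {x l : ℝ} (h0 : 0 ≤ x) (h1 : x ≤ 1) :
    exp (l * x) ≤ 1 - x + x * exp l := by
  have := convexOn_exp.2 (Set.mem_univ (0:ℝ)) (Set.mem_univ l)
    (by linarith : (0:ℝ) ≤ 1 - x) h0 (by ring)
  simpa [mul_comm, add_comm] using this

section
variable {Ω : Type*} [Fintype Ω] [Nonempty Ω]

open Classical in
/-- One-sided Chernoff-Hoeffding counting bound. -/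
lemma chernoff_count (h : Ω → ℝ) (h0 : ∀ ω, 0 ≤ h ω) (h1 : ∀ ω, h ω ≤ 1)
    {p : ℝ} (hp : ∑ ω, h ω = (Fintype.card Ω : ℝ) * p) (k : ℕ) {t : ℝ} (ht : 0 ≤ t) :
    ((univ.filter fun f : Fin k → Ω =>
        (k : ℝ) * t ≤ (∑ i, h (f i)) - k * p).card : ℝ) ≤
      (Fintype.card Ω : ℝ) ^ k * exp (-2 * k * t ^ 2) := by
  classical
  set n : ℝ := (Fintype.card Ω : ℝ) with hn
  have hnpos : 0 < n := by
    have : (0:ℕ) < Fintype.card Ω := Fintype.card_pos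
    rw [hn]; exact_mod_cast this
  have hsum_nonneg : 0 ≤ ∑ ω, h ω := Finset.sum_nonneg fun ω _ => h0 ω
  have hsum_le : ∑ ω, h ω ≤ n := by
    calc ∑ ω, h ω ≤ ∑ _ω : Ω, (1:ℝ) := Finset.sum_le_sum fun ω _ => h1 ω
      _ = n := by simp [hn]
  have hp0 : 0 ≤ p := by
    by_contra hcon
    push_neg at hcon
    nlinarith [hp ▸ hsum_nonneg]
  have hp1 : p ≤ 1 := by
    by_contra hcon
    push_neg at hcon
    nlinarith [hp ▸ hsum_le]
  set l : ℝ := 4 * t with hl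
  have hl0 : 0 ≤ l := by positivity
  set M : ℝ := ∑ ω, exp (l * (h ω - p)) with hM
  have hMle : M ≤ n * exp (l ^ 2 / 8) := by
    have step : ∀ ω : Ω, exp (l * (h ω - p)) ≤ (1 - h ω + h ω * exp l) * exp (-(l * p)) := by
      intro ω
      have : exp (l * (h ω - p)) = exp (l * h ω) * exp (-(l * p)) := by
        rw [← Real.exp_add]; ring_nf
      rw [this]
      exact mul_le_mul_of_nonneg_right (exp_mul_le_affine (h0 ω) (h1 ω)) (exp_pos _).le
    calc M ≤ ∑ ω, (1 - h ω + h ω * exp l) * exp (-(l * p)) :=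
          Finset.sum_le_sum fun ω _ => step ω
      _ = (n * (1 - p + p * exp l)) * exp (-(l * p)) := by
          rw [← Finset.sum_mul]
          congr 1
          rw [Finset.sum_add_distrib, Finset.sum_sub_distrib, ← Finset.sum_mul, hp]
          simp [hn]; ring
      _ = n * ((1 - p + p * exp l) * exp (-(l * p))) := by ring
      _ ≤ n * exp (l ^ 2 / 8) :=
          mul_le_mul_of_nonneg_left (hoeffding_mgf hp0 hp1 l) hnpos.le
  have hM0 : 0 ≤ M := Finset.sum_nonneg fun ω _ => (exp_pos _).le
  have hkey : ∑ f : Fin k → Ω, exp (l * ((∑ i, h (f i)) - k * p)) = M ^ k := by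
    have h1' : ∀ f : Fin k → Ω, exp (l * ((∑ i, h (f i)) - k * p)) =
        ∏ i : Fin k, exp (l * (h (f i) - p)) := by
      intro f
      rw [← Real.exp_sum]
      congr 1
      simp only [mul_sub, Finset.sum_sub_distrib, Finset.mul_sum, Finset.sum_const,
        Finset.card_univ, Fintype.card_fin, nsmul_eq_mul]
      ring
    simp_rw [h1']
    rw [← Fintype.prod_sum (f := fun (_ : Fin k) (ω : Ω) => exp (l * (h ω - p)))]
    simp [hM]
  set F : Finset (Fin k → Ω) :=
    univ.filter fun f : Fin k → Ω => (k : ℝ) * t ≤ (∑ i, h (f i)) - k * p with hF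
  have hcard : (F.card : ℝ) * exp (l * (k * t)) ≤ M ^ k := by
    have h2 : ∀ f ∈ F, exp (l * (k * t)) ≤ exp (l * ((∑ i, h (f i)) - k * p)) := by
      intro f hf
      rw [hF, Finset.mem_filter] at hf
      exact Real.exp_le_exp.2 (mul_le_mul_of_nonneg_left hf.2 hl0)
    calc (F.card : ℝ) * exp (l * (k * t)) = F.card • exp (l * (k * t)) := by
          rw [nsmul_eq_mul]
      _ ≤ ∑ f ∈ F, exp (l * ((∑ i, h (f i)) - k * p)) := Finset.card_nsmul_le_sum F _ _ h2
      _ ≤ ∑ f : Fin k → Ω, exp (l * ((∑ i, h (f i)) - k * p)) :=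
          Finset.sum_le_sum_of_subset_of_nonneg (Finset.filter_subset _ _)
            (fun f _ _ => (exp_pos _).le)
      _ = M ^ k := hkey
  have hfinal : (F.card : ℝ) ≤ n ^ k * exp (-2 * k * t ^ 2) := by
    have hMk : M ^ k ≤ (n * exp (l ^ 2 / 8)) ^ k :=
      pow_le_pow_left₀ hM0 hMle k
    have h3 : (F.card : ℝ) ≤ M ^ k * exp (-(l * (k * t))) := by
      rw [Real.exp_neg, ← div_eq_mul_inv, le_div_iff₀ (exp_pos _)]
      exact hcard
    calc (F.card : ℝ) ≤ M ^ k * exp (-(l * (k * t))) := h3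
      _ ≤ (n * exp (l ^ 2 / 8)) ^ k * exp (-(l * (k * t))) := by
          exact mul_le_mul_of_nonneg_right hMk (exp_pos _).le
      _ = n ^ k * (exp (l ^ 2 / 8) ^ k * exp (-(l * (k * t)))) := by ring
      _ = n ^ k * exp (-2 * k * t ^ 2) := by
          rw [← Real.exp_nat_mul, ← Real.exp_add]
          congr 2
          rw [hl]; ring
  exact hfinal

end

open Real Finset

section
variable {Ω : Type*} [Fintype Ω] [Nonempty Ω]

open Classical in
/-- Two-sided Chernoff-Hoeffding counting bound. -/
lemma chernoff_count_abs (h : Ω → ℝ) (h0 : ∀ ω, 0 ≤ h ω) (h1 : ∀ ω, h ω ≤ 1)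
    {p : ℝ} (hp : ∑ ω, h ω = (Fintype.card Ω : ℝ) * p) (k : ℕ) {t : ℝ} (ht : 0 ≤ t) :
    ((univ.filter fun f : Fin k → Ω =>
        (k : ℝ) * t ≤ |(∑ i, h (f i)) - k * p|).card : ℝ) ≤
      2 * (Fintype.card Ω : ℝ) ^ k * exp (-2 * k * t ^ 2) := by
  classical
  have hsplit : (univ.filter fun f : Fin k → Ω =>
      (k : ℝ) * t ≤ |(∑ i, h (f i)) - k * p|) ⊆
      (univ.filter fun f : Fin k → Ω => (k : ℝ) * t ≤ (∑ i, h (f i)) - k * p) ∪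
      (univ.filter fun f : Fin k → Ω =>
        (k : ℝ) * t ≤ (∑ i, (fun ω => 1 - h ω) (f i)) - k * (1 - p)) := by
    intro f hf
    rw [Finset.mem_filter] at hf
    rcases le_abs.mp hf.2 with hle | hle
    · exact Finset.mem_union_left _ (Finset.mem_filter.2 ⟨Finset.mem_univ f, hle⟩)
    · refine Finset.mem_union_right _ (Finset.mem_filter.2 ⟨Finset.mem_univ f, ?_⟩)
      have : (∑ i, (fun ω => 1 - h ω) (f i)) - (k : ℝ) * (1 - p)
          = -((∑ i, h (f i)) - k * p) := by
        simp only [Finset.sum_sub_distrib, Finset.sum_const, Finset.card_univ,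
          Fintype.card_fin, nsmul_eq_mul]
        ring
      rw [this]
      exact hle
  have h2 := chernoff_count (fun ω => 1 - h ω) (fun ω => by linarith [h1 ω])
    (fun ω => by linarith [h0 ω])
    (p := 1 - p) (by rw [Finset.sum_sub_distrib, hp]; simp; ring) k ht
  have h1' := chernoff_count h h0 h1 hp k ht
  calc ((univ.filter fun f : Fin k → Ω =>
        (k : ℝ) * t ≤ |(∑ i, h (f i)) - k * p|).card : ℝ)
      ≤ (((univ.filter fun f : Fin k → Ω => (k : ℝ) * t ≤ (∑ i, h (f i)) - k * p) ∪
      (univ.filter fun f : Fin k → Ω =>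
        (k : ℝ) * t ≤ (∑ i, (fun ω => 1 - h ω) (f i)) - k * (1 - p))).card : ℝ) := by
        exact_mod_cast Nat.cast_le.2 (Finset.card_le_card hsplit)
    _ ≤ (((univ.filter fun f : Fin k → Ω => (k : ℝ) * t ≤ (∑ i, h (f i)) - k * p).card : ℝ) +
        ((univ.filter fun f : Fin k → Ω =>
          (k : ℝ) * t ≤ (∑ i, (fun ω => 1 - h ω) (f i)) - k * (1 - p)).card : ℝ)) := by
        exact_mod_cast Nat.cast_le.2 (Finset.card_union_le _ _)
    _ ≤ (Fintype.card Ω : ℝ) ^ k * exp (-2 * k * t ^ 2) +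
        (Fintype.card Ω : ℝ) ^ k * exp (-2 * k * t ^ 2) := add_le_add h1' h2
    _ = 2 * (Fintype.card Ω : ℝ) ^ k * exp (-2 * k * t ^ 2) := by ring

end

open Real Finset

/-- Double sampling lemma: for `S ⊆ A × B` and independent uniform samples
`a₁,…,a_k ∈ A`, `b₁,…,b_k ∈ B`, with probability at least `1 − 4e^{−δ²k/2}`
the empirical frequency of `S` among the pairs `(a_i, b_j)` differs from
`|S|/(|A|·|B|)` by less than `δ`. -/
theorem double_sampling
    {A B : Type*} [Fintype A] [Fintype B] [DecidableEq A] [DecidableEq B]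
    [Nonempty A] [Nonempty B]
    (S : Finset (A × B)) (δ : ℝ) (hδ : 0 < δ) (k : ℕ) (hk : 0 < k) :
    1 - 4 * Real.exp (-δ^2 * k / 2) ≤
      (Nat.card {fg : (Fin k → A) × (Fin k → B) //
          |((Finset.univ.filter fun ij : Fin k × Fin k =>
              (fg.1 ij.1, fg.2 ij.2) ∈ S).card : ℝ) / (k : ℝ)^2
            - (S.card : ℝ) / ((Fintype.card A : ℝ) * Fintype.card B)| < δ} : ℝ)
        / (Fintype.card ((Fin k → A) × (Fin k → B)) : ℝ) := by
  classical
  set nA : ℝ := (Fintype.card A : ℝ) with hnA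
  set nB : ℝ := (Fintype.card B : ℝ) with hnB
  have hnA0 : 0 < nA := by rw [hnA]; exact_mod_cast Fintype.card_pos
  have hnB0 : 0 < nB := by rw [hnB]; exact_mod_cast Fintype.card_pos
  have hk0 : (0:ℝ) < (k:ℝ) := by exact_mod_cast hk
  set μ : ℝ := (S.card : ℝ) / (nA * nB) with hμ
  set E : ℝ := Real.exp (-δ^2 * k / 2) with hE
  have hEpos : 0 < E := Real.exp_pos _
  have hexp : Real.exp (-2 * (k:ℝ) * (δ/2) ^ 2) = E := by rw [hE]; congr 1; ring
  have ht2 : (0:ℝ) ≤ δ / 2 := by linarith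
  -- column density function
  set q : A → ℝ := fun a => ((univ.filter fun b : B => (a, b) ∈ S).card : ℝ) / nB with hq
  have hq0 : ∀ a, 0 ≤ q a := fun a => by
    rw [hq]; positivity
  have hq1 : ∀ a, q a ≤ 1 := by
    intro a
    rw [hq, div_le_one hnB0, hnB]
    exact_mod_cast (Finset.card_filter_le _ _).trans (le_of_eq Finset.card_univ)
  have hqcard : ∀ a : A, ((univ.filter fun b : B => (a, b) ∈ S).card : ℝ) = nB * q a := by
    intro a
    rw [hq]
    field_simp
  have hqsum : ∑ a : A, q a = nA * μ := by
    have hSsum : ∑ a : A, ((univ.filter fun b : B => (a, b) ∈ S).card : ℝ)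
        = (S.card : ℝ) := by
      have h1 : ∀ a : A, ((univ.filter fun b : B => (a, b) ∈ S).card : ℝ)
          = ∑ b : B, (if (a, b) ∈ S then (1:ℝ) else 0) := fun a =>
        (Finset.sum_boole _ _).symm
      simp_rw [h1]
      rw [← Fintype.sum_prod_type (f := fun x : A × B => if x ∈ S then (1:ℝ) else 0)]
      rw [Finset.sum_boole]
      congr 1
      congr 1
      ext x
      simp
    have h2 : ∑ a : A, (nB * q a) = (S.card : ℝ) := by
      rw [← hSsum]
      exact Finset.sum_congr rfl fun a _ => (hqcard a).symm
    rw [← Finset.mul_sum] at h2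
    rw [hμ]
    field_simp at h2 ⊢
    nlinarith [h2]
  -- step 1 : bad column tuples
  have hbadA := chernoff_count_abs q hq0 hq1 (p := μ) hqsum k (t := δ/2) ht2
  rw [hexp] at hbadA
  -- row density function depending on f
  set r : (Fin k → A) → B → ℝ := fun f b =>
    ((univ.filter fun i : Fin k => (f i, b) ∈ S).card : ℝ) / k with hr
  have hr0 : ∀ f b, 0 ≤ r f b := fun f b => div_nonneg (Nat.cast_nonneg _) hk0.le
  have hr1 : ∀ f b, r f b ≤ 1 := by
    intro f b
    rw [hr, div_le_one hk0]
    calc ((univ.filter fun i : Fin k => (f i, b) ∈ S).card : ℝ)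
        ≤ ((univ : Finset (Fin k)).card : ℝ) := by
          exact_mod_cast Finset.card_filter_le _ _
      _ = (k : ℝ) := by simp
  have hrcard : ∀ (f : Fin k → A) (b : B),
      ((univ.filter fun i : Fin k => (f i, b) ∈ S).card : ℝ) = (k:ℝ) * r f b := by
    intro f b
    exact (mul_div_cancel₀ _ hk0.ne').symm
  have hrsum : ∀ f : Fin k → A, ∑ b : B, r f b = nB * ((∑ i, q (f i)) / k) := by
    intro f
    have key : ∑ b : B, ((univ.filter fun i : Fin k => (f i, b) ∈ S).card : ℝ)
        = ∑ i : Fin k, (nB * q (f i)) := by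
      have h1 : ∀ b : B, ((univ.filter fun i : Fin k => (f i, b) ∈ S).card : ℝ)
          = ∑ i : Fin k, (if (f i, b) ∈ S then (1:ℝ) else 0) := fun b =>
        (Finset.sum_boole _ _).symm
      have h2 : ∀ i : Fin k, (nB * q (f i))
          = ∑ b : B, (if (f i, b) ∈ S then (1:ℝ) else 0) := by
        intro i
        rw [Finset.sum_boole]
        exact (hqcard (f i)).symm
      simp_rw [h1, h2]
      exact Finset.sum_comm
    have key2 : ∑ b : B, ((k:ℝ) * r f b) = ∑ i : Fin k, (nB * q (f i)) := by
      rw [← key]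
      exact Finset.sum_congr rfl fun b _ => (hrcard f b).symm
    rw [← Finset.mul_sum, ← Finset.mul_sum] at key2
    have e : nB * ((∑ i, q (f i)) / k) = (nB * ∑ i, q (f i)) / (k:ℝ) := by ring
    rw [e, eq_div_iff (ne_of_gt hk0), ← key2]
    ring
  -- step 2 : bad row tuples for a fixed f
  have hbadB : ∀ f : Fin k → A,
      ((univ.filter fun g : Fin k → B =>
        (k : ℝ) * (δ/2) ≤ |(∑ j, r f (g j)) - k * ((∑ i, q (f i)) / k)|).card : ℝ) ≤
      2 * nB ^ k * E := by
    intro f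
    have := chernoff_count_abs (r f) (hr0 f) (hr1 f)
      (p := (∑ i, q (f i)) / k) (hrsum f) k (t := δ/2) ht2
    rwa [hexp] at this
  -- relating pair counts to row sums
  have hN : ∀ (f : Fin k → A) (g : Fin k → B),
      ((Finset.univ.filter fun ij : Fin k × Fin k =>
        (f ij.1, g ij.2) ∈ S).card : ℝ) = (k:ℝ) * ∑ j, r f (g j) := by
    intro f g
    have h1 : ((Finset.univ.filter fun ij : Fin k × Fin k =>
        (f ij.1, g ij.2) ∈ S).card : ℝ)
        = ∑ ij : Fin k × Fin k, (if (f ij.1, g ij.2) ∈ S then (1:ℝ) else 0) :=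
      (Finset.sum_boole _ _).symm
    rw [h1, Fintype.sum_prod_type]
    rw [Finset.sum_comm]
    have h2 : ∀ j : Fin k, ∑ i : Fin k, (if (f i, g j) ∈ S then (1:ℝ) else 0)
        = (k:ℝ) * r f (g j) := by
      intro j
      rw [Finset.sum_boole]
      exact hrcard f (g j)
    simp_rw [h2]
    rw [← Finset.mul_sum]
  -- the good-pair implication
  have hgood : ∀ (f : Fin k → A) (g : Fin k → B),
      ¬ ((k : ℝ) * (δ/2) ≤ |(∑ i, q (f i)) - k * μ|) →
      ¬ ((k : ℝ) * (δ/2) ≤ |(∑ j, r f (g j)) - k * ((∑ i, q (f i)) / k)|) →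
      |((Finset.univ.filter fun ij : Fin k × Fin k =>
          (f ij.1, g ij.2) ∈ S).card : ℝ) / (k : ℝ)^2 - μ| < δ := by
    intro f g hf hg
    rw [not_le] at hf hg
    rw [hN f g]
    set X : ℝ := ∑ j, r f (g j) with hX
    set Q : ℝ := ∑ i, q (f i) with hQ
    have e1 : (k:ℝ) * X / (k:ℝ)^2 - μ = (X - k * μ) / k := by
      field_simp
    rw [e1, abs_div, abs_of_pos hk0, div_lt_iff₀ hk0]
    have e2 : (k:ℝ) * (Q / k) = Q := by field_simp
    rw [e2] at hg
    calc |X - (k:ℝ) * μ| ≤ |X - Q| + |Q - (k:ℝ) * μ| := abs_sub_le _ _ _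
      _ < (k:ℝ) * (δ/2) + (k:ℝ) * (δ/2) := add_lt_add hg hf
      _ = δ * (k:ℝ) := by ring
  -- counting bad pairs
  set P : (Fin k → A) × (Fin k → B) → Prop := fun fg =>
    |((Finset.univ.filter fun ij : Fin k × Fin k =>
        (fg.1 ij.1, fg.2 ij.2) ∈ S).card : ℝ) / (k : ℝ)^2 - μ| < δ with hP
  have hBad : ((univ.filter fun fg : (Fin k → A) × (Fin k → B) => ¬ P fg).card : ℝ)
      ≤ 4 * (nA ^ k * nB ^ k) * E := by
    have hsplit : ((univ.filter fun fg : (Fin k → A) × (Fin k → B) => ¬ P fg).card : ℝ)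
        = ∑ f : Fin k → A,
            ((univ.filter fun g : Fin k → B => ¬ P (f, g)).card : ℝ) := by
      have h1 : ((univ.filter fun fg : (Fin k → A) × (Fin k → B) => ¬ P fg).card : ℝ)
          = ∑ fg : (Fin k → A) × (Fin k → B), (if ¬ P fg then (1:ℝ) else 0) :=
        (Finset.sum_boole _ _).symm
      rw [h1, Fintype.sum_prod_type]
      congr 1
      ext f
      exact Finset.sum_boole _ _
    rw [hsplit]
    have hbound : ∀ f : Fin k → A,
        ((univ.filter fun g : Fin k → B => ¬ P (f, g)).card : ℝ) ≤
          if (k : ℝ) * (δ/2) ≤ |(∑ i, q (f i)) - k * μ| then nB ^ k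
          else 2 * nB ^ k * E := by
      intro f
      split_ifs with hf
      · calc ((univ.filter fun g : Fin k → B => ¬ P (f, g)).card : ℝ)
            ≤ ((univ : Finset (Fin k → B)).card : ℝ) := by
              exact_mod_cast Finset.card_filter_le _ _
          _ = nB ^ k := by
              rw [Finset.card_univ, hnB]
              rw [Fintype.card_fun]
              simp
      · have hsub : (univ.filter fun g : Fin k → B => ¬ P (f, g)) ⊆
            (univ.filter fun g : Fin k → B =>
              (k : ℝ) * (δ/2) ≤ |(∑ j, r f (g j)) - k * ((∑ i, q (f i)) / k)|) := by
          intro g hg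
          rw [Finset.mem_filter] at hg ⊢
          refine ⟨Finset.mem_univ g, ?_⟩
          by_contra hcon
          exact hg.2 (hgood f g hf hcon)
        calc ((univ.filter fun g : Fin k → B => ¬ P (f, g)).card : ℝ)
            ≤ ((univ.filter fun g : Fin k → B =>
              (k : ℝ) * (δ/2) ≤ |(∑ j, r f (g j)) - k * ((∑ i, q (f i)) / k)|).card : ℝ) := by
              exact_mod_cast Finset.card_le_card hsub
          _ ≤ 2 * nB ^ k * E := hbadB f
    calc ∑ f : Fin k → A, ((univ.filter fun g : Fin k → B => ¬ P (f, g)).card : ℝ)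
        ≤ ∑ f : Fin k → A,
            (if (k : ℝ) * (δ/2) ≤ |(∑ i, q (f i)) - k * μ| then nB ^ k
              else 2 * nB ^ k * E) := Finset.sum_le_sum fun f _ => hbound f
      _ = ((univ.filter fun f : Fin k → A =>
              (k : ℝ) * (δ/2) ≤ |(∑ i, q (f i)) - k * μ|).card : ℝ) * nB ^ k
          + ((univ.filter fun f : Fin k → A =>
              ¬ ((k : ℝ) * (δ/2) ≤ |(∑ i, q (f i)) - k * μ|)).card : ℝ) * (2 * nB ^ k * E) := by
          rw [Finset.sum_ite, Finset.sum_const, Finset.sum_const]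
          simp [nsmul_eq_mul]
      _ ≤ (2 * nA ^ k * E) * nB ^ k + nA ^ k * (2 * nB ^ k * E) := by
          have hc1 : ((univ.filter fun f : Fin k → A =>
              ¬ ((k : ℝ) * (δ/2) ≤ |(∑ i, q (f i)) - k * μ|)).card : ℝ) ≤ nA ^ k := by
            calc ((univ.filter fun f : Fin k → A =>
                ¬ ((k : ℝ) * (δ/2) ≤ |(∑ i, q (f i)) - k * μ|)).card : ℝ)
                ≤ ((univ : Finset (Fin k → A)).card : ℝ) := by
                  exact_mod_cast Finset.card_filter_le _ _
              _ = nA ^ k := by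
                  rw [Finset.card_univ, hnA, Fintype.card_fun]
                  simp
          have h2' : (0:ℝ) ≤ nB ^ k := by positivity
          have h3' : (0:ℝ) ≤ 2 * nB ^ k * E := by positivity
          exact add_le_add (mul_le_mul_of_nonneg_right hbadA h2')
            (mul_le_mul_of_nonneg_right hc1 h3')
      _ = 4 * (nA ^ k * nB ^ k) * E := by ring
  -- total count
  have hT : (Fintype.card ((Fin k → A) × (Fin k → B)) : ℝ) = nA ^ k * nB ^ k := by
    rw [Fintype.card_prod, Fintype.card_fun, Fintype.card_fun]
    push_cast
    simp [hnA, hnB]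
  have hT0 : (0:ℝ) < (Fintype.card ((Fin k → A) × (Fin k → B)) : ℝ) := by
    rw [hT]; positivity
  -- identify Nat.card with filter card
  have hNatCard : (Nat.card {fg : (Fin k → A) × (Fin k → B) // P fg} : ℝ)
      = ((univ.filter P).card : ℝ) := by
    rw [Nat.card_eq_fintype_card, Fintype.card_subtype]
  have hpartition : ((univ.filter P).card : ℝ)
      + ((univ.filter fun fg : (Fin k → A) × (Fin k → B) => ¬ P fg).card : ℝ)
      = (Fintype.card ((Fin k → A) × (Fin k → B)) : ℝ) := by
    have := Finset.card_filter_add_card_filter_not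
      (s := (univ : Finset ((Fin k → A) × (Fin k → B)))) (p := P)
    rw [Finset.card_univ] at this
    exact_mod_cast this
  have hgoal : Nat.card {fg : (Fin k → A) × (Fin k → B) //
          |((Finset.univ.filter fun ij : Fin k × Fin k =>
              (fg.1 ij.1, fg.2 ij.2) ∈ S).card : ℝ) / (k : ℝ)^2 - μ| < δ}
      = Nat.card {fg : (Fin k → A) × (Fin k → B) // P fg} := rfl
  rw [hgoal, le_div_iff₀ hT0, hNatCard]
  have hBad' : ((univ.filter fun fg : (Fin k → A) × (Fin k → B) => ¬ P fg).card : ℝ)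
      ≤ 4 * (Fintype.card ((Fin k → A) × (Fin k → B)) : ℝ) * E := by
    rw [hT]; linarith [hBad]
  nlinarith [hBad', hpartition, hT0]
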